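/- For a ∈ (0, 1/2), the triple cyclic integral ∫_0^1∫_0^1∫_0^1 |x₁-x₂|^{-a}|x₂-x₃|^{-a}|x₃-x₁|^{-a} dx₁dx₂dx₃ is finite. -/

import Mathlib

open MeasureTheory
open scoped ENNReal

section Helpers
open Set
open scoped ENNReal

private lemma J_fin (b : ℝ) (hb1 : b < 1) :
    ∫⁻ t in Ioo (0:ℝ) 1, ENNReal.ofReal (|t| ^ (-b)) < ⊤ := by
  have h1 : IntegrableOn (fun t : ℝ => t ^ (-b)) (Ioo (0:ℝ) 1) :=
    (intervalIntegral.integrableOn_Ioo_rpow_iff zero_lt_one).2 (by linarith)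
  have h2 : IntegrableOn (fun t : ℝ => |t| ^ (-b)) (Ioo (0:ℝ) 1) := by
    refine h1.congr_fun (fun t ht => ?_) measurableSet_Ioo
    rw [abs_of_pos ht.1]
  simpa using h2.lintegral_lt_top

private lemma lint_neg (g : ℝ → ℝ≥0∞) : ∫⁻ x, g (-x) = ∫⁻ x, g x := by
  conv_rhs => rw [← Measure.map_neg_eq_self (volume : Measure ℝ)]
  exact (lintegral_map_equiv g (MeasurableEquiv.neg ℝ)).symm

private lemma key (b : ℝ) (hb1 : b < 1) :
    ∃ C : ℝ≥0∞, C ≠ ⊤ ∧ ∀ y ∈ Icc (0:ℝ) 1,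
      ∫⁻ x in Ioo (0:ℝ) 1, ENNReal.ofReal (|x - y| ^ (-b)) ≤ C := by
  set F : ℝ → ℝ≥0∞ := fun t => ENNReal.ofReal (|t| ^ (-b)) with hF
  set J := ∫⁻ t in Ioo (0:ℝ) 1, F t with hJ
  refine ⟨2 * J, ENNReal.mul_ne_top (by norm_num) (J_fin b hb1).ne, fun y hy => ?_⟩
  have hIocIco : ∫⁻ t in Ioc (-1:ℝ) 0, F t = ∫⁻ t in Ico (0:ℝ) 1, F t := by
    rw [← lintegral_indicator measurableSet_Ioc, ← lintegral_indicator measurableSet_Ico,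
      ← lint_neg ((Ioc (-1:ℝ) 0).indicator F)]
    congr 1; funext t
    by_cases ht : 0 ≤ t ∧ t < 1
    · rw [indicator_of_mem (show -t ∈ Ioc (-1:ℝ) 0 by
          constructor <;> [linarith [ht.2]; linarith [ht.1]]),
        indicator_of_mem (show t ∈ Ico (0:ℝ) 1 from ht), hF]
      simp [abs_neg]
    · rw [indicator_of_notMem (show -t ∉ Ioc (-1:ℝ) 0 from
          fun h => ht ⟨by linarith [h.2], by linarith [h.1]⟩),
        indicator_of_notMem (show t ∉ Ico (0:ℝ) 1 from ht)]
  calc ∫⁻ x in Ioo (0:ℝ) 1, ENNReal.ofReal (|x - y| ^ (-b))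
      ≤ ∫⁻ x in Ioo (y-1) (y+1), ENNReal.ofReal (|x - y| ^ (-b)) :=
        lintegral_mono_set (fun x hx => ⟨by linarith [hy.2, hx.1], by linarith [hy.1, hx.2]⟩)
    _ = ∫⁻ t in Ioo (-1:ℝ) 1, F t := by
        rw [← lintegral_indicator measurableSet_Ioo, ← lintegral_indicator measurableSet_Ioo,
          ← lintegral_add_right_eq_self ((Ioo (y-1) (y+1)).indicator
            (fun x => ENNReal.ofReal (|x - y| ^ (-b)))) y]
        congr 1; funext t
        by_cases ht : -1 < t ∧ t < 1
        · rw [indicator_of_mem (show t + y ∈ Ioo (y-1) (y+1) from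
              ⟨by linarith [ht.1], by linarith [ht.2]⟩),
            indicator_of_mem (show t ∈ Ioo (-1:ℝ) 1 from ht), add_sub_cancel_right]
        · rw [indicator_of_notMem (show t + y ∉ Ioo (y-1) (y+1) from
              fun h => ht ⟨by linarith [h.1], by linarith [h.2]⟩),
            indicator_of_notMem (show t ∉ Ioo (-1:ℝ) 1 from ht)]
    _ ≤ ∫⁻ t in Ioc (-1:ℝ) 0 ∪ Ioo (0:ℝ) 1, F t :=
        lintegral_mono_set (fun t ht => by
          rcases le_or_gt t 0 with h | h
          · exact Or.inl ⟨ht.1, h⟩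
          · exact Or.inr ⟨h, ht.2⟩)
    _ ≤ (∫⁻ t in Ioc (-1:ℝ) 0, F t) + ∫⁻ t in Ioo (0:ℝ) 1, F t := lintegral_union_le F _ _
    _ = 2 * J := by
        rw [hIocIco, ← setLIntegral_congr Ioo_ae_eq_Ico, ← hJ, two_mul]

private lemma amgm {a : ℝ} (ha : 0 < a) {d₁ d₂ d₃ : ℝ} (h₁ : 0 ≤ d₁) (h₂ : 0 ≤ d₂)
    (h₃ : 0 ≤ d₃) :
    d₁ ^ (-a) * d₂ ^ (-a) * d₃ ^ (-a) ≤
      d₁ ^ (-(3*a/2)) * d₂ ^ (-(3*a/2)) + d₂ ^ (-(3*a/2)) * d₃ ^ (-(3*a/2)) +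
      d₃ ^ (-(3*a/2)) * d₁ ^ (-(3*a/2)) := by
  have hn : ∀ x : ℝ, 0 ≤ x → ∀ c : ℝ, 0 ≤ x ^ c := fun x hx c => Real.rpow_nonneg hx c
  have hP := mul_nonneg (hn d₁ h₁ (-(3*a/2))) (hn d₂ h₂ (-(3*a/2)))
  have hQ := mul_nonneg (hn d₂ h₂ (-(3*a/2))) (hn d₃ h₃ (-(3*a/2)))
  have hR := mul_nonneg (hn d₃ h₃ (-(3*a/2))) (hn d₁ h₁ (-(3*a/2)))
  rcases h₁.eq_or_lt with rfl | h₁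
  · rw [Real.zero_rpow (by linarith : -a ≠ 0)]
    simpa using by linarith
  rcases h₂.eq_or_lt with rfl | h₂
  · rw [Real.zero_rpow (by linarith : -a ≠ 0)]
    simpa using by linarith
  rcases h₃.eq_or_lt with rfl | h₃
  · rw [Real.zero_rpow (by linarith : -a ≠ 0)]
    simpa using by linarith
  have hp : ∀ x : ℝ, 0 < x → (x ^ (-(3*a/2))) ^ (1/3:ℝ) = x ^ (-a/2) := by
    intro x hx
    rw [← Real.rpow_mul hx.le]
    congr 1; ring
  have hsplit : ∀ x : ℝ, 0 < x → x ^ (-a/2) * x ^ (-a/2) = x ^ (-a) := by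
    intro x hx
    rw [← Real.rpow_add hx]; congr 1; ring
  have hgm := Real.geom_mean_le_arith_mean3_weighted (by norm_num : (0:ℝ) ≤ 1/3)
    (by norm_num : (0:ℝ) ≤ 1/3) (by norm_num : (0:ℝ) ≤ 1/3) hP hQ hR (by norm_num)
  have heq : (d₁ ^ (-(3*a/2)) * d₂ ^ (-(3*a/2))) ^ (1/3:ℝ) *
      (d₂ ^ (-(3*a/2)) * d₃ ^ (-(3*a/2))) ^ (1/3:ℝ) *
      (d₃ ^ (-(3*a/2)) * d₁ ^ (-(3*a/2))) ^ (1/3:ℝ)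
      = d₁ ^ (-a) * d₂ ^ (-a) * d₃ ^ (-a) := by
    rw [Real.mul_rpow (hn d₁ h₁.le _) (hn d₂ h₂.le _),
      Real.mul_rpow (hn d₂ h₂.le _) (hn d₃ h₃.le _),
      Real.mul_rpow (hn d₃ h₃.le _) (hn d₁ h₁.le _),
      hp d₁ h₁, hp d₂ h₂, hp d₃ h₃,
      ← hsplit d₁ h₁, ← hsplit d₂ h₂, ← hsplit d₃ h₃]
    ring
  rw [heq] at hgm
  linarith

variable {b : ℝ} {C : ℝ≥0∞}

private lemma double1 (hC : ∀ y ∈ Icc (0:ℝ) 1,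
      ∫⁻ x in Ioo (0:ℝ) 1, ENNReal.ofReal (|x - y| ^ (-b)) ≤ C) (hCt : C ≠ ⊤)
    {y : ℝ} (hy : y ∈ Icc (0:ℝ) 1) :
    ∫⁻ u in Ioo (0:ℝ) 1, ∫⁻ v in Ioo (0:ℝ) 1,
      ENNReal.ofReal (|y - u| ^ (-b)) * ENNReal.ofReal (|u - v| ^ (-b)) ≤ C * C := by
  calc ∫⁻ u in Ioo (0:ℝ) 1, ∫⁻ v in Ioo (0:ℝ) 1,
        ENNReal.ofReal (|y - u| ^ (-b)) * ENNReal.ofReal (|u - v| ^ (-b))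
      = ∫⁻ u in Ioo (0:ℝ) 1, ENNReal.ofReal (|y - u| ^ (-b)) *
          ∫⁻ v in Ioo (0:ℝ) 1, ENNReal.ofReal (|u - v| ^ (-b)) :=
        lintegral_congr fun u => lintegral_const_mul' _ _ ENNReal.ofReal_ne_top
    _ ≤ ∫⁻ u in Ioo (0:ℝ) 1, ENNReal.ofReal (|y - u| ^ (-b)) * C := by
        refine setLIntegral_mono' measurableSet_Ioo fun u hu => mul_le_mul_right ?_ _
        have := hC u ⟨hu.1.le, hu.2.le⟩
        simpa only [abs_sub_comm _ u] using this
    _ = (∫⁻ u in Ioo (0:ℝ) 1, ENNReal.ofReal (|y - u| ^ (-b))) * C :=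
        lintegral_mul_const' _ _ hCt
    _ ≤ C * C := by
        refine mul_le_mul_left ?_ _
        have := hC y hy
        simpa only [abs_sub_comm _ y] using this

private lemma double2 (hC : ∀ y ∈ Icc (0:ℝ) 1,
      ∫⁻ x in Ioo (0:ℝ) 1, ENNReal.ofReal (|x - y| ^ (-b)) ≤ C) (hCt : C ≠ ⊤)
    {y : ℝ} (hy : y ∈ Icc (0:ℝ) 1) :
    ∫⁻ u in Ioo (0:ℝ) 1, ∫⁻ v in Ioo (0:ℝ) 1,
      ENNReal.ofReal (|y - u| ^ (-b)) * ENNReal.ofReal (|y - v| ^ (-b)) ≤ C * C := by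
  calc ∫⁻ u in Ioo (0:ℝ) 1, ∫⁻ v in Ioo (0:ℝ) 1,
        ENNReal.ofReal (|y - u| ^ (-b)) * ENNReal.ofReal (|y - v| ^ (-b))
      = ∫⁻ u in Ioo (0:ℝ) 1, ENNReal.ofReal (|y - u| ^ (-b)) *
          ∫⁻ v in Ioo (0:ℝ) 1, ENNReal.ofReal (|y - v| ^ (-b)) :=
        lintegral_congr fun u => lintegral_const_mul' _ _ ENNReal.ofReal_ne_top
    _ ≤ ∫⁻ u in Ioo (0:ℝ) 1, ENNReal.ofReal (|y - u| ^ (-b)) * C := by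
        refine setLIntegral_mono' measurableSet_Ioo fun u hu => mul_le_mul_right ?_ _
        have := hC y hy
        simpa only [abs_sub_comm _ y] using this
    _ = (∫⁻ u in Ioo (0:ℝ) 1, ENNReal.ofReal (|y - u| ^ (-b))) * C :=
        lintegral_mul_const' _ _ hCt
    _ ≤ C * C := by
        refine mul_le_mul_left ?_ _
        have := hC y hy
        simpa only [abs_sub_comm _ y] using this

private lemma triple_bound {C : ℝ≥0∞} (g : ℝ × (ℝ × ℝ) → ℝ≥0∞) (hg : Measurable g)
    (h : ∀ x ∈ Ioo (0:ℝ) 1,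
      ∫⁻ q, g (x, q) ∂((volume.restrict (Ioo (0:ℝ) 1)).prod (volume.restrict (Ioo (0:ℝ) 1)))
        ≤ C * C) :
    ∫⁻ p, g p ∂((volume.restrict (Ioo (0:ℝ) 1)).prod
        ((volume.restrict (Ioo (0:ℝ) 1)).prod (volume.restrict (Ioo (0:ℝ) 1))))
      ≤ C * C := by
  rw [lintegral_prod _ hg.aemeasurable]
  calc ∫⁻ x in Ioo (0:ℝ) 1,
        ∫⁻ q, g (x, q) ∂((volume.restrict (Ioo (0:ℝ) 1)).prod (volume.restrict (Ioo (0:ℝ) 1)))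
      ≤ ∫⁻ _x in Ioo (0:ℝ) 1, C * C := setLIntegral_mono' measurableSet_Ioo h
    _ = C * C := by simp [Real.volume_Ioo]

end Helpers

theorem c_a3_finite (a : ℝ) (ha : a ∈ Set.Ioo (0:ℝ) (1/2)) :
    (∫⁻ p in (Set.Ioo (0:ℝ) 1) ×ˢ ((Set.Ioo (0:ℝ) 1) ×ˢ (Set.Ioo (0:ℝ) 1)),
        ENNReal.ofReal (|p.1 - p.2.1| ^ (-a) * |p.2.1 - p.2.2| ^ (-a) *
          |p.2.2 - p.1| ^ (-a))) < ⊤ := by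
  obtain ⟨ha0, ha2⟩ := ha
  obtain ⟨C, hCt, hC⟩ := key (3*a/2) (by linarith)
  set I : Set ℝ := Set.Ioo (0:ℝ) 1 with hI
  have hμ : (volume : Measure (ℝ × (ℝ × ℝ))).restrict (I ×ˢ (I ×ˢ I)) =
      (volume.restrict I).prod ((volume.restrict I).prod (volume.restrict I)) := by
    rw [Measure.volume_eq_prod, ← Measure.prod_restrict]
    congr 1
    rw [Measure.volume_eq_prod, ← Measure.prod_restrict]
  set g₁ : ℝ × (ℝ × ℝ) → ℝ≥0∞ := fun p =>
    ENNReal.ofReal (|p.1 - p.2.1| ^ (-(3*a/2))) *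
      ENNReal.ofReal (|p.2.1 - p.2.2| ^ (-(3*a/2))) with hg₁
  set g₂ : ℝ × (ℝ × ℝ) → ℝ≥0∞ := fun p =>
    ENNReal.ofReal (|p.2.1 - p.2.2| ^ (-(3*a/2))) *
      ENNReal.ofReal (|p.2.2 - p.1| ^ (-(3*a/2))) with hg₂
  set g₃ : ℝ × (ℝ × ℝ) → ℝ≥0∞ := fun p =>
    ENNReal.ofReal (|p.2.2 - p.1| ^ (-(3*a/2))) *
      ENNReal.ofReal (|p.1 - p.2.1| ^ (-(3*a/2))) with hg₃
  have hmono : ∀ p : ℝ × (ℝ × ℝ),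
      ENNReal.ofReal (|p.1 - p.2.1| ^ (-a) * |p.2.1 - p.2.2| ^ (-a) * |p.2.2 - p.1| ^ (-a))
        ≤ g₁ p + g₂ p + g₃ p := by
    intro p
    have h := amgm ha0 (abs_nonneg (p.1 - p.2.1)) (abs_nonneg (p.2.1 - p.2.2))
      (abs_nonneg (p.2.2 - p.1))
    calc ENNReal.ofReal (|p.1 - p.2.1| ^ (-a) * |p.2.1 - p.2.2| ^ (-a) * |p.2.2 - p.1| ^ (-a))
        ≤ ENNReal.ofReal (|p.1 - p.2.1| ^ (-(3*a/2)) * |p.2.1 - p.2.2| ^ (-(3*a/2)) +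
            |p.2.1 - p.2.2| ^ (-(3*a/2)) * |p.2.2 - p.1| ^ (-(3*a/2)) +
            |p.2.2 - p.1| ^ (-(3*a/2)) * |p.1 - p.2.1| ^ (-(3*a/2))) :=
          ENNReal.ofReal_le_ofReal h
      _ ≤ ENNReal.ofReal (|p.1 - p.2.1| ^ (-(3*a/2)) * |p.2.1 - p.2.2| ^ (-(3*a/2)) +
            |p.2.1 - p.2.2| ^ (-(3*a/2)) * |p.2.2 - p.1| ^ (-(3*a/2))) +
          ENNReal.ofReal (|p.2.2 - p.1| ^ (-(3*a/2)) * |p.1 - p.2.1| ^ (-(3*a/2))) :=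
          ENNReal.ofReal_add_le
      _ ≤ ENNReal.ofReal (|p.1 - p.2.1| ^ (-(3*a/2)) * |p.2.1 - p.2.2| ^ (-(3*a/2))) +
          ENNReal.ofReal (|p.2.1 - p.2.2| ^ (-(3*a/2)) * |p.2.2 - p.1| ^ (-(3*a/2))) +
          ENNReal.ofReal (|p.2.2 - p.1| ^ (-(3*a/2)) * |p.1 - p.2.1| ^ (-(3*a/2))) :=
          add_le_add_left ENNReal.ofReal_add_le _
      _ = g₁ p + g₂ p + g₃ p := by
          rw [hg₁, hg₂, hg₃]
          rw [ENNReal.ofReal_mul (Real.rpow_nonneg (abs_nonneg _) _),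
            ENNReal.ofReal_mul (Real.rpow_nonneg (abs_nonneg _) _),
            ENNReal.ofReal_mul (Real.rpow_nonneg (abs_nonneg _) _)]
  have hT1 : ∫⁻ p, g₁ p ∂((volume.restrict I).prod
      ((volume.restrict I).prod (volume.restrict I))) ≤ C * C := by
    refine triple_bound g₁ (by rw [hg₁]; fun_prop) fun x hx => ?_
    rw [lintegral_prod _ (by rw [hg₁]; fun_prop : Measurable fun q : ℝ × ℝ => g₁ (x, q)).aemeasurable]
    exact double1 hC hCt ⟨hx.1.le, hx.2.le⟩
  have hT2 : ∫⁻ p, g₂ p ∂((volume.restrict I).prod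
      ((volume.restrict I).prod (volume.restrict I))) ≤ C * C := by
    refine triple_bound g₂ (by rw [hg₂]; fun_prop) fun x hx => ?_
    rw [lintegral_prod_symm _ (by rw [hg₂]; fun_prop : Measurable fun q : ℝ × ℝ => g₂ (x, q)).aemeasurable]
    calc ∫⁻ v in I, ∫⁻ u in I,
          ENNReal.ofReal (|u - v| ^ (-(3*a/2))) * ENNReal.ofReal (|v - x| ^ (-(3*a/2)))
        = ∫⁻ v in I, ∫⁻ u in I,
            ENNReal.ofReal (|x - v| ^ (-(3*a/2))) * ENNReal.ofReal (|v - u| ^ (-(3*a/2))) := by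
          refine lintegral_congr fun v => lintegral_congr fun u => ?_
          rw [mul_comm, abs_sub_comm v x, abs_sub_comm u v]
      _ ≤ C * C := double1 hC hCt ⟨hx.1.le, hx.2.le⟩
  have hT3 : ∫⁻ p, g₃ p ∂((volume.restrict I).prod
      ((volume.restrict I).prod (volume.restrict I))) ≤ C * C := by
    refine triple_bound g₃ (by rw [hg₃]; fun_prop) fun x hx => ?_
    rw [lintegral_prod _ (by rw [hg₃]; fun_prop : Measurable fun q : ℝ × ℝ => g₃ (x, q)).aemeasurable]
    calc ∫⁻ u in I, ∫⁻ v in I,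
          ENNReal.ofReal (|v - x| ^ (-(3*a/2))) * ENNReal.ofReal (|x - u| ^ (-(3*a/2)))
        = ∫⁻ u in I, ∫⁻ v in I,
            ENNReal.ofReal (|x - u| ^ (-(3*a/2))) * ENNReal.ofReal (|x - v| ^ (-(3*a/2))) := by
          refine lintegral_congr fun u => lintegral_congr fun v => ?_
          rw [mul_comm, abs_sub_comm v x]
      _ ≤ C * C := double2 hC hCt ⟨hx.1.le, hx.2.le⟩
  calc (∫⁻ p in I ×ˢ (I ×ˢ I),
        ENNReal.ofReal (|p.1 - p.2.1| ^ (-a) * |p.2.1 - p.2.2| ^ (-a) * |p.2.2 - p.1| ^ (-a)))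
      = ∫⁻ p, ENNReal.ofReal (|p.1 - p.2.1| ^ (-a) * |p.2.1 - p.2.2| ^ (-a) *
          |p.2.2 - p.1| ^ (-a)) ∂((volume.restrict I).prod
          ((volume.restrict I).prod (volume.restrict I))) := by rw [← hμ]
    _ ≤ ∫⁻ p, (g₁ p + g₂ p + g₃ p) ∂((volume.restrict I).prod
          ((volume.restrict I).prod (volume.restrict I))) := lintegral_mono hmono
    _ = (∫⁻ p, g₁ p ∂((volume.restrict I).prod
          ((volume.restrict I).prod (volume.restrict I)))) +
        (∫⁻ p, g₂ p ∂((volume.restrict I).prod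
          ((volume.restrict I).prod (volume.restrict I)))) +
        (∫⁻ p, g₃ p ∂((volume.restrict I).prod
          ((volume.restrict I).prod (volume.restrict I)))) := by
        rw [lintegral_add_left (show Measurable (fun p => g₁ p + g₂ p) by rw [hg₁, hg₂]; fun_prop),
          lintegral_add_left (show Measurable g₁ by rw [hg₁]; fun_prop)]
    _ ≤ C * C + C * C + C * C := add_le_add (add_le_add hT1 hT2) hT3
    _ < ⊤ := by
        have : C * C ≠ ⊤ := ENNReal.mul_ne_top hCt hCt
        simp [ENNReal.add_lt_top, this.lt_top]
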